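/- Let Z ≤ 0 almost surely with E[Z²] < ∞ and λ > 0. Then E[((1/λ)log(1 − λZ))²] ≤ E[Z²/(1 − λZ)] ≤ (1/λ)E[|Z|]. Consequently, if Z₁,…,Zₙ are i.i.d. copies, the variance of (1/n)∑ᵢ −(1/λ)log(1 − λZᵢ) is at most E[Z²/(1 − λZ)]/n ≤ E[|Z|]/(λn). -/

import Mathlib

open MeasureTheory ProbabilityTheory

lemma log_sq_le_aux (t : ℝ) (ht : 0 ≤ t) :
    Real.log (1 + t) ^ 2 ≤ t ^ 2 / (1 + t) := by
  have h1 : (0:ℝ) < 1 + t := by linarith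
  set s := Real.log (1 + t) with hsdef
  have hs : 0 ≤ s := Real.log_nonneg (by linarith)
  have he : Real.exp s = 1 + t := Real.exp_log h1
  set a := Real.exp (s / 2) with hadef
  have ha : 0 < a := Real.exp_pos _
  have haa : a * a = 1 + t := by
    rw [hadef, ← Real.exp_add, ← he]; ring_nf
  have hinv : Real.exp (-(s/2)) = a⁻¹ := by rw [Real.exp_neg]
  have hsinh : s / 2 ≤ Real.sinh (s / 2) :=
    Real.self_le_sinh_iff.mpr (by positivity)
  have h2 : s ≤ a - a⁻¹ := by
    rw [Real.sinh_eq, hinv] at hsinh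
    linarith
  have h4 : a⁻¹ * a = 1 := inv_mul_cancel₀ ha.ne'
  have h3 : s * a ≤ a * a - 1 := by
    nlinarith [mul_le_mul_of_nonneg_right h2 ha.le]
  rw [le_div_iff₀ h1, ← haa]
  nlinarith [mul_nonneg hs ha.le]

lemma pt1 (lam z : ℝ) (hlam : 0 < lam) (hz : z ≤ 0) :
    ((1 / lam) * Real.log (1 - lam * z)) ^ 2 ≤ z ^ 2 / (1 - lam * z) := by
  have ht : 0 ≤ -(lam * z) := by nlinarith
  have key := log_sq_le_aux (-(lam * z)) ht
  have e0 : 1 - lam * z = 1 + -(lam * z) := by ring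
  have h1 : (0:ℝ) < 1 + -(lam * z) := by linarith
  rw [e0]
  have := mul_le_mul_of_nonneg_left key (by positivity : (0:ℝ) ≤ (1/lam)^2)
  have e2 : (1/lam)^2 * ((-(lam * z))^2 / (1 + -(lam * z))) = z^2 / (1 + -(lam * z)) := by
    field_simp
  calc ((1 / lam) * Real.log (1 + -(lam * z))) ^ 2
      = (1/lam)^2 * Real.log (1 + -(lam * z)) ^ 2 := by ring
    _ ≤ (1/lam)^2 * ((-(lam * z))^2 / (1 + -(lam * z))) := this
    _ = z^2 / (1 + -(lam * z)) := e2

lemma pt2 (lam z : ℝ) (hlam : 0 < lam) (hz : z ≤ 0) :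
    z ^ 2 / (1 - lam * z) ≤ (1 / lam) * |z| := by
  have h1 : (0:ℝ) < 1 - lam * z := by nlinarith
  rw [abs_of_nonpos hz, div_le_iff₀ h1]
  have hll : lam * (1 / lam) = 1 := mul_one_div_cancel hlam.ne'
  nlinarith [mul_nonneg (neg_nonneg.mpr hz) (one_div_pos.mpr hlam).le]

theorem stmt10 {Ω : Type*} [MeasurableSpace Ω] (μ : Measure Ω) [IsProbabilityMeasure μ]
    (lam : ℝ) (hlam : 0 < lam)
    (Z : Ω → ℝ) (hZ0 : ∀ᵐ ω ∂μ, Z ω ≤ 0)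
    (hZ2 : Integrable (fun ω => Z ω ^ 2) μ)
    (n : ℕ) (hn : 0 < n) (Zs : Fin n → Ω → ℝ)
    (hmeas : ∀ i, Measurable (Zs i))
    (hindep : iIndepFun Zs μ)
    (hident : ∀ i, IdentDistrib (Zs i) Z μ μ) :
    (∫ ω, ((1 / lam) * Real.log (1 - lam * Z ω)) ^ 2 ∂μ ≤
        ∫ ω, Z ω ^ 2 / (1 - lam * Z ω) ∂μ) ∧
    (∫ ω, Z ω ^ 2 / (1 - lam * Z ω) ∂μ ≤ (1 / lam) * ∫ ω, |Z ω| ∂μ) ∧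
    (variance (fun ω => (1 / n : ℝ) * ∑ i, -(1 / lam) * Real.log (1 - lam * Zs i ω)) μ ≤
        (∫ ω, Z ω ^ 2 / (1 - lam * Z ω) ∂μ) / n) ∧
    (∫ ω, Z ω ^ 2 / (1 - lam * Z ω) ∂μ) / n ≤ (∫ ω, |Z ω| ∂μ) / (lam * n) := by
  -- measurability of Z
  have hZm : AEStronglyMeasurable Z μ := by
    have h := (continuous_neg.comp Real.continuous_sqrt).comp_aestronglyMeasurable
      hZ2.aestronglyMeasurable
    refine h.congr ?_
    filter_upwards [hZ0] with ω hω
    simp [Real.sqrt_sq_eq_abs, abs_of_nonpos hω]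
  have hGm : AEStronglyMeasurable (fun ω => Z ω ^ 2 / (1 - lam * Z ω)) μ :=
    (hZ2.aemeasurable.div
      (aemeasurable_const.sub (hZm.aemeasurable.const_mul lam))).aestronglyMeasurable
  have hGint : Integrable (fun ω => Z ω ^ 2 / (1 - lam * Z ω)) μ := by
    refine hZ2.mono hGm ?_
    filter_upwards [hZ0] with ω hω
    have hd : (1:ℝ) ≤ 1 - lam * Z ω := by nlinarith
    have h0 : 0 ≤ Z ω ^ 2 / (1 - lam * Z ω) := by positivity
    rw [Real.norm_eq_abs, Real.norm_eq_abs, abs_of_nonneg h0, abs_of_nonneg (sq_nonneg _)]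
    exact div_le_self (sq_nonneg _) hd
  have hHm : AEStronglyMeasurable (fun ω => ((1 / lam) * Real.log (1 - lam * Z ω)) ^ 2) μ := by
    have : AEMeasurable (fun ω => ((1 / lam) * Real.log (1 - lam * Z ω)) ^ 2) μ := by
      exact (((Real.measurable_log.comp_aemeasurable
        ((aemeasurable_const.sub ((hZm.aemeasurable.const_mul lam))))).const_mul _).pow_const 2)
    exact this.aestronglyMeasurable
  have hHG : ∀ᵐ ω ∂μ, ((1 / lam) * Real.log (1 - lam * Z ω)) ^ 2 ≤
      Z ω ^ 2 / (1 - lam * Z ω) := by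
    filter_upwards [hZ0] with ω hω
    exact pt1 lam (Z ω) hlam hω
  have hHint : Integrable (fun ω => ((1 / lam) * Real.log (1 - lam * Z ω)) ^ 2) μ := by
    refine hGint.mono hHm ?_
    filter_upwards [hHG, hZ0] with ω hle hω
    have hd : (1:ℝ) ≤ 1 - lam * Z ω := by nlinarith
    have h0 : 0 ≤ Z ω ^ 2 / (1 - lam * Z ω) := by positivity
    rw [Real.norm_eq_abs, Real.norm_eq_abs, abs_of_nonneg (sq_nonneg _), abs_of_nonneg h0]
    exact hle
  have part1 : ∫ ω, ((1 / lam) * Real.log (1 - lam * Z ω)) ^ 2 ∂μ ≤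
      ∫ ω, Z ω ^ 2 / (1 - lam * Z ω) ∂μ := integral_mono_ae hHint hGint hHG
  -- |Z| integrable
  have habsm : AEStronglyMeasurable (fun ω => |Z ω|) μ := by
    simpa [Real.norm_eq_abs] using hZm.norm
  have habs : Integrable (fun ω => |Z ω|) μ := by
    refine (hZ2.add (integrable_const 1)).mono' habsm ?_
    filter_upwards with ω
    simp only [Pi.add_apply, Real.norm_eq_abs, abs_abs]
    nlinarith [sq_abs (Z ω), sq_nonneg (|Z ω| - 1)]
  have part2 : ∫ ω, Z ω ^ 2 / (1 - lam * Z ω) ∂μ ≤ (1 / lam) * ∫ ω, |Z ω| ∂μ := by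
    calc ∫ ω, Z ω ^ 2 / (1 - lam * Z ω) ∂μ
        ≤ ∫ ω, (1 / lam) * |Z ω| ∂μ := by
          refine integral_mono_ae hGint (habs.const_mul _) ?_
          filter_upwards [hZ0] with ω hω
          exact pt2 lam (Z ω) hlam hω
      _ = (1 / lam) * ∫ ω, |Z ω| ∂μ := integral_const_mul _ _
  -- part 3
  set f : ℝ → ℝ := fun z => -(1 / lam) * Real.log (1 - lam * z) with hfdef
  have hfm : Measurable f :=
    (Real.measurable_log.comp (measurable_const.sub (measurable_id'.const_mul lam))).const_mul _
  have hfZsq : (fun ω => (f (Z ω)) ^ 2) = fun ω => ((1 / lam) * Real.log (1 - lam * Z ω)) ^ 2 := by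
    funext ω; simp only [hfdef]; ring
  have hfZm : AEStronglyMeasurable (f ∘ Z) μ :=
    (hfm.comp_aemeasurable hZm.aemeasurable).aestronglyMeasurable
  have hmem : MemLp (f ∘ Z) 2 μ := by
    refine (memLp_two_iff_integrable_sq hfZm).mpr ?_
    have : (fun ω => (f ∘ Z) ω ^ 2) = fun ω => ((1 / lam) * Real.log (1 - lam * Z ω)) ^ 2 := hfZsq
    rw [this]
    exact hHint
  have hXid : ∀ i, IdentDistrib (f ∘ Zs i) (f ∘ Z) μ μ := fun i => (hident i).comp hfm
  have hmemi : ∀ i, MemLp (f ∘ Zs i) 2 μ := fun i => (hXid i).symm.memLp_snd hmem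
  have hXindep : iIndepFun (fun i => f ∘ Zs i) μ :=
    hindep.comp (fun _ => f) (fun _ => hfm)
  have hvarsum : variance (∑ i, f ∘ Zs i) μ = ∑ i : Fin n, variance (f ∘ Zs i) μ :=
    IndepFun.variance_sum (fun i _ => hmemi i)
      (fun i _ j _ hij => hXindep.indepFun hij)
  have hvareq : ∀ i, variance (f ∘ Zs i) μ = variance (f ∘ Z) μ := fun i => (hXid i).variance_eq
  have hfun : (fun ω => (1 / n : ℝ) * ∑ i, -(1 / lam) * Real.log (1 - lam * Zs i ω)) =
      (1 / n : ℝ) • (∑ i, f ∘ Zs i) := by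
    funext ω
    simp [hfdef, Finset.sum_apply]
  have hvarZ : variance (f ∘ Z) μ ≤ ∫ ω, Z ω ^ 2 / (1 - lam * Z ω) ∂μ := by
    calc variance (f ∘ Z) μ ≤ μ[(f ∘ Z) ^ 2] := variance_le_expectation_sq hfZm
      _ = ∫ ω, ((1 / lam) * Real.log (1 - lam * Z ω)) ^ 2 ∂μ := by
          rw [← hfZsq]; rfl
      _ ≤ _ := part1
  have hnR : (0:ℝ) < (n:ℝ) := Nat.cast_pos.mpr hn
  have part3 : variance (fun ω => (1 / n : ℝ) *
      ∑ i, -(1 / lam) * Real.log (1 - lam * Zs i ω)) μ ≤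
      (∫ ω, Z ω ^ 2 / (1 - lam * Z ω) ∂μ) / n := by
    rw [hfun, variance_smul, hvarsum]
    have : ∑ i : Fin n, variance (f ∘ Zs i) μ = n * variance (f ∘ Z) μ := by
      simp [hvareq]
    rw [this]
    have hvnn : 0 ≤ variance (f ∘ Z) μ := variance_nonneg _ _
    rw [div_eq_mul_inv]
    calc (1 / (n:ℝ)) ^ 2 * ((n:ℝ) * variance (f ∘ Z) μ)
        = variance (f ∘ Z) μ * ((n:ℝ))⁻¹ := by
          field_simp
          try ring
      _ ≤ (∫ ω, Z ω ^ 2 / (1 - lam * Z ω) ∂μ) * ((n:ℝ))⁻¹ := by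
          exact mul_le_mul_of_nonneg_right hvarZ (by positivity)
  have part4 : (∫ ω, Z ω ^ 2 / (1 - lam * Z ω) ∂μ) / n ≤ (∫ ω, |Z ω| ∂μ) / (lam * n) := by
    have : ((1 / lam) * ∫ ω, |Z ω| ∂μ) / n = (∫ ω, |Z ω| ∂μ) / (lam * n) := by
      field_simp
      try ring
    rw [← this]
    exact div_le_div_of_nonneg_right part2 hnR.le
  exact ⟨part1, part2, part3, part4⟩
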